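/- Let (J,W) be a pure graphon, and let f ∈ L²(J) be an eigenfunction of the kernel operator of W with nonzero eigenvalue λ, i.e., λ f(x) = ∫_J W(x,y) f(y) dy for all x. Then f is bounded (|f(x)| ≤ ‖f‖₂/|λ|) and f is continuous with respect to the neighborhood metric r_W. -/

import Mathlib

open MeasureTheory

/-- For a pure graphon `(J,W)`, every `L²` eigenfunction `f` of the kernel
operator of `W` with nonzero eigenvalue `λ` is bounded, `|f(x)| ≤ ‖f‖₂/|λ|`,
and continuous with respect to the neighborhood metric `r_W`. -/
theorem eigenfunction_bounded_continuous
    {J : Type*} [MetricSpace J] [CompleteSpace J] [TopologicalSpace.SeparableSpace J]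
    [MeasurableSpace J] [BorelSpace J]
    (μ : Measure J) [IsProbabilityMeasure μ] [μ.IsOpenPosMeasure]
    (W : J → J → ℝ)
    (hWmeas : Measurable (fun p : J × J => W p.1 p.2))
    (hWsymm : ∀ x y, W x y = W y x)
    (hW0 : ∀ x y, 0 ≤ W x y) (hW1 : ∀ x y, W x y ≤ 1)
    (hdist : ∀ x y : J, dist x y = ∫ z, |W x z - W y z| ∂μ)
    (f : J → ℝ) (hf : MemLp f 2 μ)
    (lam : ℝ) (hlam : lam ≠ 0)
    (heig : ∀ x, lam * f x = ∫ y, W x y * f y ∂μ) :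
    (∀ x, |f x| ≤ (eLpNorm f 2 μ).toReal / |lam|) ∧ Continuous f := by
  have hfi : Integrable f μ := hf.integrable (by norm_num)
  set M := (eLpNorm f 2 μ).toReal with hM
  have hMnonneg : 0 ≤ M := ENNReal.toReal_nonneg
  have hlp : 0 < |lam| := abs_pos.mpr hlam
  -- ∫ |f| ≤ M
  have habs : ∫ y, |f y| ∂μ ≤ M := by
    have h1 : eLpNorm f 1 μ ≤ eLpNorm f 2 μ :=
      eLpNorm_le_eLpNorm_of_exponent_le (by norm_num) hf.1
    have h2 : ∫ y, |f y| ∂μ = (eLpNorm f 1 μ).toReal := by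
      rw [eLpNorm_one_eq_lintegral_enorm]
      simp_rw [← Real.norm_eq_abs]
      exact integral_norm_eq_lintegral_enorm hf.1
    rw [h2]
    exact ENNReal.toReal_mono hf.2.ne h1
  have hWx : ∀ x : J, Measurable (fun y => W x y) := fun x =>
    hWmeas.comp (measurable_const.prodMk measurable_id)
  have hint : ∀ x, Integrable (fun y => W x y * f y) μ := fun x =>
    hfi.bdd_mul (c := 1) (hWx x).aestronglyMeasurable (Filter.Eventually.of_forall fun y => by
      rw [Real.norm_eq_abs, abs_of_nonneg (hW0 x y)]; exact hW1 x y)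
  have hbound : ∀ x, |f x| ≤ M / |lam| := by
    intro x
    have h1 : |lam * f x| ≤ M := by
      rw [heig x]
      calc |∫ y, W x y * f y ∂μ| ≤ ∫ y, |W x y| * |f y| ∂μ := by
            simpa [Real.norm_eq_abs] using
              norm_integral_le_integral_norm (fun y => W x y * f y) (μ := μ)
        _ ≤ ∫ y, |f y| ∂μ := by
            refine integral_mono_of_nonneg
              (Filter.Eventually.of_forall fun y => mul_nonneg (abs_nonneg _) (abs_nonneg _))
              hfi.abs (Filter.Eventually.of_forall fun y => ?_)
            calc |W x y| * |f y| ≤ 1 * |f y| := by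
                  apply mul_le_mul_of_nonneg_right _ (abs_nonneg _)
                  rw [abs_of_nonneg (hW0 x y)]; exact hW1 x y
              _ = |f y| := one_mul _
        _ ≤ M := habs
    rw [abs_mul] at h1
    rw [le_div_iff₀ hlp]
    calc |f x| * |lam| = |lam| * |f x| := mul_comm _ _
      _ ≤ M := h1
  refine ⟨hbound, ?_⟩
  have hK : LipschitzWith (Real.toNNReal (M / |lam| / |lam|)) f := by
    refine LipschitzWith.of_dist_le_mul fun x x' => ?_
    have heq : lam * (f x - f x') = ∫ y, (W x y - W x' y) * f y ∂μ := by
      rw [mul_sub, heig x, heig x', ← integral_sub (hint x) (hint x')]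
      congr 1; funext y; ring
    have hdint : Integrable (fun y => |W x y - W x' y|) μ := by
      refine (integrable_const (1:ℝ)).mono'
        (((hWx x).sub (hWx x')).abs.aestronglyMeasurable)
        (Filter.Eventually.of_forall fun y => ?_)
      rw [Real.norm_eq_abs, abs_abs]
      exact abs_le.mpr ⟨by linarith [hW0 x y, hW1 x' y], by linarith [hW1 x y, hW0 x' y]⟩
    have key : |lam| * |f x - f x'| ≤ M / |lam| * dist x x' := by
      calc |lam| * |f x - f x'| = |lam * (f x - f x')| := (abs_mul _ _).symm
        _ = |∫ y, (W x y - W x' y) * f y ∂μ| := by rw [heq]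
        _ ≤ ∫ y, |W x y - W x' y| * |f y| ∂μ := by
            simpa [Real.norm_eq_abs] using
              norm_integral_le_integral_norm (fun y => (W x y - W x' y) * f y) (μ := μ)
        _ ≤ ∫ y, |W x y - W x' y| * (M / |lam|) ∂μ := by
            refine integral_mono_of_nonneg
              (Filter.Eventually.of_forall fun y => mul_nonneg (abs_nonneg _) (abs_nonneg _))
              (hdint.mul_const _) (Filter.Eventually.of_forall fun y => ?_)
            exact mul_le_mul_of_nonneg_left (hbound y) (abs_nonneg _)
        _ = (∫ y, |W x y - W x' y| ∂μ) * (M / |lam|) := integral_mul_const _ _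
        _ = dist x x' * (M / |lam|) := by rw [hdist]
        _ = M / |lam| * dist x x' := mul_comm _ _
    rw [Real.dist_eq, Real.coe_toNNReal _
      (div_nonneg (div_nonneg hMnonneg (abs_nonneg _)) (abs_nonneg _))]
    rw [div_mul_eq_mul_div, le_div_iff₀ hlp]
    calc |f x - f x'| * |lam| = |lam| * |f x - f x'| := mul_comm _ _
      _ ≤ M / |lam| * dist x x' := key
  exact hK.continuous
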